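/- Let X₁, X₂, … be a strictly stationary and ergodic sequence with finite essential supremum γ, P(X₁ = γ) = P(X₁ = γ − a) = 0 for fixed a > 0, and let U be any real random variable (possibly dependent on the sequence). Define Rₙ = Xₙ + U. Then for any sequence of integers (kₙ) with 1 ≤ kₙ ≤ n and kₙ/n → 1, (1/n) Σ_{i=1}^n 1{R_{kₙ:n} − a < R_i < R_{kₙ:n}} converges almost surely to P(X₁ > γ − a) as n → ∞. -/

import Mathlib

open MeasureTheory Filter Set
open scoped Topology ENNReal

noncomputable section

/-- The shift map on real sequences. -/
def seqShift (y : ℕ → ℝ) : ℕ → ℝ := fun n => y (n + 1)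

/-- The path map associating to each sample point the sequence of observations. -/
def path {Ω : Type*} (X : ℕ → Ω → ℝ) (ω : Ω) : ℕ → ℝ := fun n => X n ω

/-- The `k`-th smallest value (k counted from 1) among `x 0, …, x (n-1)`. -/
def ordStat (k n : ℕ) (x : ℕ → ℝ) : ℝ :=
  ((List.ofFn (fun i : Fin n => x i)).insertionSort (· ≤ ·)).getD (k - 1) 0

/-- Number of observations among `x 0, …, x (n-1)` in the left `a`-neighborhood of the
`k`-th order statistic. -/
def nearCount (k n : ℕ) (a : ℝ) (x : ℕ → ℝ) : ℕ :=
  ((Finset.range n).filter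
    (fun i => ordStat k n x - a < x i ∧ x i < ordStat k n x)).card

/-- Sum of observations among `x 0, …, x (n-1)` in the left `a`-neighborhood of the
`k`-th order statistic. -/
def nearSum (k n : ℕ) (a : ℝ) (x : ℕ → ℝ) : ℝ :=
  ∑ i ∈ Finset.range n,
    if ordStat k n x - a < x i ∧ x i < ordStat k n x then x i else 0

/-- The right endpoint `sup {x : P(X ≤ x) < 1}` of the support of `X`, as an extended real. -/
def rightEndpoint {Ω : Type*} [MeasurableSpace Ω] (μ : Measure Ω) (X : Ω → ℝ) : EReal :=
  sSup ((fun r : ℝ => (r : EReal)) '' {r : ℝ | μ {ω | X ω ≤ r} < 1})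


section OrdStat

variable {k n : ℕ} {x : ℕ → ℝ}

lemma sortedList_length (n : ℕ) (x : ℕ → ℝ) :
    ((List.ofFn (fun i : Fin n => x i)).insertionSort (· ≤ ·)).length = n := by
  rw [List.length_insertionSort, List.length_ofFn]

lemma ordStat_eq_getElem (h1 : 1 ≤ k) (h2 : k ≤ n) :
    ordStat k n x = ((List.ofFn (fun i : Fin n => x i)).insertionSort (· ≤ ·))[k-1]'
      (by rw [sortedList_length]; omega) := by
  rw [ordStat, List.getD_eq_getElem]

lemma ordStat_mem (h1 : 1 ≤ k) (h2 : k ≤ n) : ∃ i : Fin n, ordStat k n x = x i := by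
  rw [ordStat_eq_getElem h1 h2]
  have hmem := List.getElem_mem (l := (List.ofFn (fun i : Fin n => x i)).insertionSort (· ≤ ·))
    (n := k - 1) (by rw [sortedList_length]; omega)
  rw [(List.perm_insertionSort _ _).mem_iff, List.mem_ofFn] at hmem
  obtain ⟨i, hi⟩ := hmem
  exact ⟨i, hi.symm⟩

lemma ordStat_le_of_all (h1 : 1 ≤ k) (h2 : k ≤ n) {γ : ℝ} (hx : ∀ i : Fin n, x i ≤ γ) :
    ordStat k n x ≤ γ := by
  obtain ⟨i, hi⟩ := ordStat_mem h1 h2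
  rw [hi]; exact hx i

lemma countP_eq_card_filter (n : ℕ) (x : ℕ → ℝ) (p : ℝ → Prop) [DecidablePred p] :
    (List.ofFn (fun i : Fin n => x i)).countP (fun y => decide (p y))
      = ((Finset.range n).filter (fun i => p (x i))).card := by
  induction n generalizing x with
  | zero => simp
  | succ m IH =>
    rw [List.ofFn_succ, List.countP_cons]
    have h1 : (fun i : Fin m => x (Fin.succ i)) = fun i : Fin m => (fun j => x (j+1)) i := by
      funext i
      simp [Fin.val_succ]
    rw [h1, IH (fun j => x (j+1))]
    rw [Finset.card_filter, Finset.card_filter, Finset.sum_range_succ']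
    simp only [Fin.val_zero]
    congr 1
    by_cases hp : p (x 0) <;> simp [hp]

end OrdStat




section LimsupHelpers

lemma bdd_above_of_abs {u : ℕ → ℝ} {M : ℝ} (h : ∀ n, |u n| ≤ M) :
    IsBoundedUnder (· ≤ ·) atTop u :=
  ⟨M, Filter.eventually_map.2 (Filter.Eventually.of_forall fun n => (abs_le.1 (h n)).2)⟩

lemma bdd_below_of_abs {u : ℕ → ℝ} {M : ℝ} (h : ∀ n, |u n| ≤ M) :
    IsBoundedUnder (· ≥ ·) atTop u :=
  ⟨-M, Filter.eventually_map.2 (Filter.Eventually.of_forall fun n => (abs_le.1 (h n)).1)⟩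

lemma limsup_le_limsup_of_tendsto_sub {u v : ℕ → ℝ} {M : ℝ}
    (hu : ∀ n, |u n| ≤ M) (hv : ∀ n, |v n| ≤ M)
    (h : Filter.Tendsto (fun n => v n - u n) atTop (𝓝 0)) :
    Filter.limsup v atTop ≤ Filter.limsup u atTop := by
  have hub := bdd_above_of_abs hu
  have hlb := bdd_below_of_abs hu
  have hcob : IsCoboundedUnder (· ≤ ·) atTop u := hlb.isCoboundedUnder_le
  refine le_of_forall_pos_le_add fun ε hε => ?_
  have hev : ∀ᶠ n in atTop, v n ≤ u n + ε := by
    filter_upwards [Metric.tendsto_nhds.1 h ε hε] with n hn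
    have : |v n - u n| < ε := by simpa [Real.dist_eq] using hn
    linarith [(abs_lt.1 this).2]
  calc Filter.limsup v atTop ≤ Filter.limsup (fun n => u n + ε) atTop := by
        refine Filter.limsup_le_limsup hev ?_ ?_
        · exact (bdd_below_of_abs hv).isCoboundedUnder_le
        · exact ⟨M + ε, Filter.eventually_map.2 (Filter.Eventually.of_forall fun n => by
            linarith [(abs_le.1 (hu n)).2])⟩
    _ = Filter.limsup u atTop + ε := limsup_add_const atTop u ε hub hcob

lemma limsup_eq_limsup_of_tendsto_sub {u v : ℕ → ℝ} {M : ℝ}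
    (hu : ∀ n, |u n| ≤ M) (hv : ∀ n, |v n| ≤ M)
    (h : Filter.Tendsto (fun n => v n - u n) atTop (𝓝 0)) :
    Filter.limsup v atTop = Filter.limsup u atTop := by
  refine le_antisymm (limsup_le_limsup_of_tendsto_sub hu hv h) ?_
  refine limsup_le_limsup_of_tendsto_sub hv hu ?_
  have := h.neg
  simpa [neg_sub] using this

end LimsupHelpers


section KW

variable {α : Type*}

/-- Birkhoff sum splitting. -/
lemma birkhoff_split (T : α → α) (g : α → ℝ) (m n : ℕ) (x : α) :
    ∑ i ∈ Finset.range (m + n), g (T^[i] x)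
      = (∑ i ∈ Finset.range m, g (T^[i] x))
        + ∑ i ∈ Finset.range n, g (T^[i] (T^[m] x)) := by
  rw [Finset.sum_range_add]
  congr 1
  refine Finset.sum_congr rfl fun i _ => ?_
  rw [← Function.iterate_add_apply, Nat.add_comm m i]

/-- Katznelson–Weiss covering estimate. -/
lemma kw_cover {T : α → α} {g : α → ℝ} {nn : α → ℕ} {N : ℕ} {d m : ℝ}
    (hm : ∀ x, m ≤ g x)
    (h1 : ∀ x, 1 ≤ nn x) (hN : ∀ x, nn x ≤ N)
    (hs : ∀ x, (nn x : ℝ) * d ≤ ∑ i ∈ Finset.range (nn x), g (T^[i] x)) :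
    ∀ L : ℕ, ∀ x, (L : ℝ) * d - N * (|d| + |m|) ≤ ∑ i ∈ Finset.range L, g (T^[i] x) := by
  intro L
  induction L using Nat.strong_induction_on with
  | _ L IH =>
    intro x
    by_cases hL : L ≤ N
    · have hlow : (L : ℝ) * m ≤ ∑ i ∈ Finset.range L, g (T^[i] x) := by
        calc (L : ℝ) * m = ∑ _i ∈ Finset.range L, m := by
              rw [Finset.sum_const, Finset.card_range, nsmul_eq_mul]
          _ ≤ _ := Finset.sum_le_sum fun i _ => hm _
      have hB : (L : ℝ) * (d - m) ≤ (N : ℝ) * (|d| + |m|) := by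
        have h1 : d - m ≤ |d| + |m| := by
          have := le_abs_self d; have := neg_abs_le m; linarith [neg_le_abs m, le_abs_self d]
        have h2 : (L : ℝ) ≤ N := Nat.cast_le.2 hL
        have h3 : (0:ℝ) ≤ |d| + |m| := by positivity
        nlinarith [Nat.cast_nonneg (α := ℝ) L]
      nlinarith [hlow]
    · push_neg at hL
      have hnx : nn x ≤ L := le_trans (hN x) hL.le
      obtain ⟨L', hL'⟩ : ∃ L', L = nn x + L' := ⟨L - nn x, by omega⟩
      have hIH := IH L' (by have := h1 x; omega) (T^[nn x] x)
      have hsplit := birkhoff_split T g (nn x) L' x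
      subst hL'
      rw [hsplit]
      push_cast
      nlinarith [hs x, hIH]

end KW


section Birkhoff

variable {α : Type*} [MeasurableSpace α] {μ : Measure α} [IsProbabilityMeasure μ]
  {T : α → α} {f : α → ℝ} {M : ℝ}

local notation "S" => fun (g : α → ℝ) (n : ℕ) (x : α) => ∑ i ∈ Finset.range n, g (T^[i] x)

lemma nonempty_of_prob (μ : Measure α) [IsProbabilityMeasure μ] : Nonempty α := by
  by_contra h
  rw [not_nonempty_iff] at h
  have : μ Set.univ = 1 := measure_univ
  rw [Set.univ_eq_empty_iff.2 h] at this
  simp at this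

lemma integrable_of_bdd (hf : Measurable f) (hM : ∀ x, |f x| ≤ M) : Integrable f μ :=
  (integrable_const M).mono' hf.aestronglyMeasurable
    (Filter.Eventually.of_forall fun x => by simpa using hM x)

lemma integral_birkhoffSum (hT : MeasurePreserving T μ μ) {g : α → ℝ} (hg : Measurable g)
    {Mg : ℝ} (hMg : ∀ x, |g x| ≤ Mg) (L : ℕ) :
    ∫ x, (∑ i ∈ Finset.range L, g (T^[i] x)) ∂μ = L * ∫ x, g x ∂μ := by
  have hint : ∀ i : ℕ, Integrable (fun x => g (T^[i] x)) μ := by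
    intro i
    exact integrable_of_bdd ((hg.comp (hT.iterate i).measurable)) (fun x => hMg _)
  rw [integral_finset_sum _ (fun i _ => hint i)]
  have : ∀ i : ℕ, ∫ x, g (T^[i] x) ∂μ = ∫ x, g x ∂μ := by
    intro i
    conv_rhs => rw [← (hT.iterate i).map_eq]
    rw [integral_map (hT.iterate i).measurable.aemeasurable hg.aestronglyMeasurable]
  simp only [this, Finset.sum_const, Finset.card_range, nsmul_eq_mul]

lemma abs_S_div_le (hM : ∀ x, |f x| ≤ M) (hM0 : 0 ≤ M) (x : α) (n : ℕ) :
    |(∑ i ∈ Finset.range n, f (T^[i] x)) / n| ≤ M := by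
  rcases Nat.eq_zero_or_pos n with rfl | hn
  · simpa using hM0
  · rw [abs_div]
    rw [div_le_iff₀ (by positivity : (0:ℝ) < |(n:ℝ)|)]
    calc |∑ i ∈ Finset.range n, f (T^[i] x)| ≤ ∑ i ∈ Finset.range n, |f (T^[i] x)| :=
          Finset.abs_sum_le_sum_abs _ _
      _ ≤ ∑ _i ∈ Finset.range n, M := Finset.sum_le_sum fun i _ => hM _
      _ = n * M := by rw [Finset.sum_const, Finset.card_range, nsmul_eq_mul]
      _ = M * |(n:ℝ)| := by rw [Nat.abs_cast]; ring

/-- Main one-sided Katznelson–Weiss estimate: if the Birkhoff averages' limsup is a.e. `c`,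
then `c ≤ ∫ f`. -/
lemma kw_main (hT : Ergodic T μ) (hf : Measurable f) (hM : ∀ x, |f x| ≤ M) {c : ℝ}
    (hc : ∀ᵐ x ∂μ,
      Filter.limsup (fun n => (∑ i ∈ Finset.range n, f (T^[i] x)) / n) atTop = c) :
    c ≤ ∫ x, f x ∂μ := by
  classical
  have : Nonempty α := nonempty_of_prob μ
  obtain ⟨x₀⟩ := this
  have hM0 : 0 ≤ M := le_trans (abs_nonneg _) (hM x₀)
  set M₂ : ℝ := M + |c| with hM₂def
  have hM₂0 : 0 ≤ M₂ := by positivity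
  -- the inner claim, for each ε > 0
  have key : ∀ ε : ℝ, 0 < ε → c ≤ ∫ x, f x ∂μ + ε * (1 + 2 * M₂) := by
    intro ε hε
    set d : ℝ := c - ε with hd
    set P : ℕ → α → Prop := fun n x =>
      1 ≤ n ∧ (n : ℝ) * d ≤ ∑ i ∈ Finset.range n, f (T^[i] x) with hP
    have hTm : Measurable T := hT.toMeasurePreserving.measurable
    have hSmeas : ∀ n : ℕ, Measurable (fun x => ∑ i ∈ Finset.range n, f (T^[i] x)) := by
      intro n
      exact Finset.measurable_sum _ fun i _ => hf.comp (hTm.iterate i)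
    have hPmeas : ∀ n, MeasurableSet {x | P n x} := by
      intro n
      by_cases h1n : 1 ≤ n
      · have : {x | P n x} = {x | (n : ℝ) * d ≤ ∑ i ∈ Finset.range n, f (T^[i] x)} := by
          ext x; simp [hP, h1n]
        rw [this]
        exact measurableSet_le measurable_const (hSmeas n)
      · have : {x | P n x} = ∅ := by ext x; simp [hP, h1n]
        rw [this]; exact MeasurableSet.empty
    -- a.e. there is a good time
    have hGood : ∀ᵐ x ∂μ, ∃ n, P n x := by
      filter_upwards [hc] with x hx
      have hcob : IsCoboundedUnder (· ≤ ·) atTop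
          (fun n => (∑ i ∈ Finset.range n, f (T^[i] x)) / n) :=
        (bdd_below_of_abs (abs_S_div_le hM hM0 x)).isCoboundedUnder_le
      have hfreq : ∃ᶠ n in atTop, d < (∑ i ∈ Finset.range n, f (T^[i] x)) / n := by
        apply Filter.frequently_lt_of_lt_limsup hcob
        rw [hx]; linarith
      obtain ⟨n, hn1, hnd⟩ := (hfreq.and_eventually (Filter.eventually_ge_atTop 1)).exists
      refine ⟨n, hnd, ?_⟩
      have hnpos : (0:ℝ) < n := by exact_mod_cast hnd
      rw [lt_div_iff₀ hnpos] at hn1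
      linarith
    -- the bad sets
    set E : ℕ → Set α := fun N => {x | ∀ n ≤ N, ¬ P n x} with hE
    have hEmeas : ∀ N, MeasurableSet (E N) := by
      intro N
      have : E N = ⋂ (n : ℕ) (_ : n ≤ N), {x | P n x}ᶜ := by
        ext x; simp [hE]
      rw [this]
      exact MeasurableSet.iInter fun n => MeasurableSet.iInter fun _ => (hPmeas n).compl
    have hEanti : Antitone E := by
      intro N₁ N₂ h x hx n hn
      exact hx n (le_trans hn h)
    have hEnull : μ (⋂ N, E N) = 0 := by
      refine measure_mono_null ?_ (ae_iff.1 hGood)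
      intro x hx
      simp only [Set.mem_iInter] at hx
      simp only [Set.mem_setOf_eq, not_exists] at *
      intro n
      exact hx n n le_rfl
    have htend : Filter.Tendsto (fun N => μ (E N)) atTop (𝓝 0) := by
      have := MeasureTheory.tendsto_measure_iInter_atTop
        (fun N => (hEmeas N).nullMeasurableSet) hEanti ⟨0, measure_ne_top μ _⟩
      rw [hEnull] at this
      exact this
    obtain ⟨N₀, hN₀⟩ := (htend.eventually_lt_const (ENNReal.ofReal_pos.2 hε)).exists
    set N : ℕ := max N₀ 1 with hNdef
    have hN1 : 1 ≤ N := le_max_right _ _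
    have hEN : μ (E N) < ENNReal.ofReal ε :=
      lt_of_le_of_lt (measure_mono (hEanti (le_max_left _ _))) hN₀
    -- modified function and times
    set g : α → ℝ := fun x => if ∃ n ≤ N, P n x then f x else max (f x) c with hgdef
    set nn : α → ℕ := fun x => if hx : ∃ n ≤ N, P n x then hx.choose else 1 with hnndef
    have hgf : ∀ x, f x ≤ g x := by
      intro x; by_cases hx : ∃ n ≤ N, P n x <;> simp [hgdef, hx, le_max_left]
    have hgm : Measurable g := by
      have hs : MeasurableSet {x | ∃ n ≤ N, P n x} := by
        have : {x | ∃ n ≤ N, P n x} = ⋃ (n : ℕ) (_ : n ≤ N), {x | P n x} := by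
          ext x
          simp only [Set.mem_setOf_eq, Set.mem_iUnion]
          exact ⟨fun ⟨n, h1, h2⟩ => ⟨n, h1, h2⟩, fun ⟨n, h1, h2⟩ => ⟨n, h1, h2⟩⟩
        rw [this]
        exact MeasurableSet.iUnion fun n => MeasurableSet.iUnion fun _ => hPmeas n
      exact Measurable.ite hs hf (hf.max measurable_const)
    have hgb : ∀ x, |g x| ≤ M₂ := by
      intro x
      rw [abs_le]
      constructor
      · by_cases hx : ∃ n ≤ N, P n x <;> simp only [hgdef, hx, if_true, if_false] <;>
          [skip; refine le_trans ?_ (le_max_left _ _)] <;>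
          linarith [(abs_le.1 (hM x)).1, abs_nonneg c]
      · by_cases hx : ∃ n ≤ N, P n x <;> simp only [hgdef, hx, if_true, if_false]
        · linarith [(abs_le.1 (hM x)).2, abs_nonneg c]
        · exact max_le (by linarith [(abs_le.1 (hM x)).2, abs_nonneg c])
            (by linarith [le_abs_self c])
    have hnn1 : ∀ x, 1 ≤ nn x := by
      intro x
      by_cases hx : ∃ n ≤ N, P n x
      · simp only [hnndef, dif_pos hx]
        exact hx.choose_spec.2.1
      · simp [hnndef, dif_neg hx]
    have hnnN : ∀ x, nn x ≤ N := by
      intro x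
      by_cases hx : ∃ n ≤ N, P n x
      · simp only [hnndef, dif_pos hx]
        exact hx.choose_spec.1
      · simp only [hnndef, dif_neg hx]; exact hN1
    have hnns : ∀ x, (nn x : ℝ) * d ≤ ∑ i ∈ Finset.range (nn x), g (T^[i] x) := by
      intro x
      by_cases hx : ∃ n ≤ N, P n x
      · simp only [hnndef, dif_pos hx]
        refine le_trans hx.choose_spec.2.2 (Finset.sum_le_sum fun i _ => hgf _)
      · simp only [hnndef, dif_neg hx, Nat.cast_one, one_mul, Finset.range_one,
          Finset.sum_singleton, Function.iterate_zero_apply]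
        have : g x = max (f x) c := by simp [hgdef, hx]
        rw [this]
        refine le_trans ?_ (le_max_right _ _)
        linarith
    -- covering estimate
    have hcov := kw_cover (T := T) (g := g) (nn := nn) (N := N) (d := d) (m := -M₂)
      (fun x => by linarith [(abs_le.1 (hgb x)).1]) hnn1 hnnN hnns
    -- integrate
    have hint : ∀ L : ℕ, (L : ℝ) * d - N * (|d| + |(-M₂ : ℝ)|) ≤ (L : ℝ) * ∫ x, g x ∂μ := by
      intro L
      rw [← integral_birkhoffSum hT.toMeasurePreserving hgm hgb L]
      have hconst : ∫ _x : α, ((L : ℝ) * d - N * (|d| + |(-M₂ : ℝ)|)) ∂μ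
          = (L : ℝ) * d - N * (|d| + |(-M₂ : ℝ)|) := by
        simp
      rw [← hconst]
      refine integral_mono (integrable_const _) ?_ (fun x => hcov L x)
      refine integrable_of_bdd (M := (L : ℝ) * M₂)
        (Finset.measurable_sum _ fun i _ => hgm.comp (hTm.iterate i)) ?_
      intro x
      calc |∑ i ∈ Finset.range L, g (T^[i] x)| ≤ ∑ i ∈ Finset.range L, |g (T^[i] x)| :=
            Finset.abs_sum_le_sum_abs _ _
        _ ≤ ∑ _i ∈ Finset.range L, M₂ := Finset.sum_le_sum fun i _ => hgb _
        _ = (L : ℝ) * M₂ := by rw [Finset.sum_const, Finset.card_range, nsmul_eq_mul]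
    have hdg : d ≤ ∫ x, g x ∂μ := by
      have htendd : Filter.Tendsto
          (fun L : ℕ => d - (N * (|d| + |(-M₂ : ℝ)|)) / L) atTop (𝓝 (d - 0)) :=
        (tendsto_const_nhds).sub (tendsto_const_div_atTop_nhds_zero_nat _)
      rw [sub_zero] at htendd
      refine le_of_tendsto htendd ?_
      filter_upwards [Filter.eventually_ge_atTop 1] with L hL
      have hLpos : (0:ℝ) < L := by exact_mod_cast hL
      have h4 : (L : ℝ) * (((N : ℝ) * (|d| + |(-M₂ : ℝ)|)) / L) = (N : ℝ) * (|d| + |(-M₂ : ℝ)|) := by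
        field_simp
      by_contra hcon
      push_neg at hcon
      have h5 := mul_lt_mul_of_pos_left hcon hLpos
      rw [mul_sub, h4] at h5
      linarith [hint L]
    -- compare ∫ g with ∫ f
    have hgint : Integrable g μ := integrable_of_bdd hgm hgb
    have hfint : Integrable f μ := integrable_of_bdd hf hM
    have hdiff : ∫ x, g x ∂μ - ∫ x, f x ∂μ ≤ 2 * M₂ * ε := by
      have h1 : ∫ x, g x ∂μ - ∫ x, f x ∂μ = ∫ x, (g x - f x) ∂μ :=
        (integral_sub hgint hfint).symm
      rw [h1]
      have h2 : ∀ x, g x - f x ≤ (E N).indicator (fun _ => 2 * M₂) x := by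
        intro x
        by_cases hx : ∃ n ≤ N, P n x
        · have hxE : x ∉ E N := by
            simp only [hE, Set.mem_setOf_eq, not_forall]
            obtain ⟨n, hn, hPn⟩ := hx
            exact ⟨n, hn, not_not_intro hPn⟩
          simp [hgdef, hx, Set.indicator_of_notMem hxE]
        · have hxE : x ∈ E N := by
            simp only [hE, Set.mem_setOf_eq]
            intro n hn hPn
            exact hx ⟨n, hn, hPn⟩
          rw [Set.indicator_of_mem hxE]
          simp only [hgdef, hx, if_false]
          have hmax : max (f x) c ≤ M₂ := by
            refine max_le ?_ ?_
            · have := (abs_le.1 (hM x)).2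
              have := abs_nonneg c
              simp only [hM₂def]
              linarith
            · have := le_abs_self c
              simp only [hM₂def]
              linarith
          have hfl : -M₂ ≤ f x := by
            have := (abs_le.1 (hM x)).1
            have := abs_nonneg c
            simp only [hM₂def]
            linarith
          linarith
      calc ∫ x, (g x - f x) ∂μ ≤ ∫ x, (E N).indicator (fun _ => 2 * M₂) x ∂μ := by
            refine integral_mono (hgint.sub hfint) ?_ h2
            exact (integrable_const _).indicator (hEmeas N)
        _ = (μ (E N)).toReal * (2 * M₂) := by
            rw [integral_indicator_const _ (hEmeas N)]; simp [smul_eq_mul, measureReal_def]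
        _ ≤ ε * (2 * M₂) := by
            have := (ENNReal.toReal_lt_of_lt_ofReal hEN).le
            nlinarith [ENNReal.toReal_nonneg (a := μ (E N))]
        _ = 2 * M₂ * ε := by ring
    have habs : |(-M₂ : ℝ)| = M₂ := by rw [abs_neg, abs_of_nonneg hM₂0]
    have : c - ε ≤ ∫ x, f x ∂μ + 2 * M₂ * ε := by
      have := hdg
      simp only [hd] at this
      linarith [hdiff]
    linarith
  refine le_of_forall_pos_le_add fun η hη => ?_
  have hpos : (0:ℝ) < 1 + 2 * M₂ := by linarith
  have := key (η / (1 + 2 * M₂)) (by positivity)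
  calc c ≤ ∫ x, f x ∂μ + (η / (1 + 2 * M₂)) * (1 + 2 * M₂) := this
    _ = ∫ x, f x ∂μ + η := by rw [div_mul_cancel₀]; exact ne_of_gt hpos

end Birkhoff
section Birkhoff2

variable {α : Type*} [MeasurableSpace α] {μ : Measure α} [IsProbabilityMeasure μ]
  {T : α → α} {f : α → ℝ} {M : ℝ}

lemma limsup_ae_const (hT : Ergodic T μ) (hf : Measurable f) (hM : ∀ x, |f x| ≤ M) :
    ∃ c : ℝ, ∀ᵐ x ∂μ,
      Filter.limsup (fun n => (∑ i ∈ Finset.range n, f (T^[i] x)) / n) atTop = c := by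
  have : Nonempty α := nonempty_of_prob μ
  obtain ⟨x₀⟩ := this
  have hM0 : 0 ≤ M := le_trans (abs_nonneg _) (hM x₀)
  have hTm : Measurable T := hT.toMeasurePreserving.measurable
  set A : ℕ → α → ℝ := fun n x => (∑ i ∈ Finset.range n, f (T^[i] x)) / n with hA
  have hAm : ∀ n, Measurable (A n) := by
    intro n
    exact (Finset.measurable_sum _ fun i _ => hf.comp (hTm.iterate i)).div_const _
  set φ : α → ℝ := fun x => Filter.limsup (fun n => A n x) atTop with hφ
  have hφm : Measurable φ := Measurable.limsup hAm
  have hstep : ∀ x n, (∑ i ∈ Finset.range n, f (T^[i] (T x)))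
      = (∑ i ∈ Finset.range n, f (T^[i] x)) + f (T^[n] x) - f x := by
    intro x n
    have h1 : ∑ i ∈ Finset.range n, f (T^[i] (T x)) = ∑ i ∈ Finset.range n, f (T^[i+1] x) := by
      refine Finset.sum_congr rfl fun i _ => ?_
      rw [← Function.iterate_succ_apply]
    have h2 := Finset.sum_range_succ' (fun i => f (T^[i] x)) n
    have h3 := Finset.sum_range_succ (fun i => f (T^[i] x)) n
    simp only [Function.iterate_zero_apply] at h2
    rw [h1]
    rw [h3] at h2
    linarith
  have hinv : ∀ x, φ (T x) = φ x := by
    intro x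
    refine limsup_eq_limsup_of_tendsto_sub (M := M)
      (abs_S_div_le hM hM0 x) (abs_S_div_le hM hM0 (T x)) ?_
    have heq : (fun n => A n (T x) - A n x) = fun n => (f (T^[n] x) - f x) / n := by
      funext n
      rw [hA]
      simp only
      rw [div_sub_div_same, hstep x n]
      ring_nf
    rw [heq]
    have hb : ∀ n : ℕ, ‖(f (T^[n] x) - f x) / (n : ℝ)‖ ≤ (2 * M) / (n : ℝ) := by
      intro n
      rcases Nat.eq_zero_or_pos n with rfl | hn
      · simp
      · rw [Real.norm_eq_abs, abs_div, Nat.abs_cast]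
        rw [div_le_div_iff_of_pos_right (by exact_mod_cast hn : (0:ℝ) < n)]
        calc |f (T^[n] x) - f x| ≤ |f (T^[n] x)| + |f x| := abs_sub _ _
          _ ≤ 2 * M := by linarith [hM (T^[n] x), hM x]
    exact squeeze_zero_norm hb (tendsto_const_div_atTop_nhds_zero_nat _)
  have hφT : φ ∘ T =ᵐ[μ] φ := Filter.Eventually.of_forall hinv
  obtain ⟨c, hc⟩ := hT.ae_eq_const_of_ae_eq_comp₀ hφm.nullMeasurable hφT
  exact ⟨c, hc⟩

theorem birkhoff_bdd (hT : Ergodic T μ) (hf : Measurable f) (hM : ∀ x, |f x| ≤ M) :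
    ∀ᵐ x ∂μ, Filter.Tendsto (fun n => (∑ i ∈ Finset.range n, f (T^[i] x)) / n) atTop
      (𝓝 (∫ x, f x ∂μ)) := by
  have : Nonempty α := nonempty_of_prob μ
  obtain ⟨x₀⟩ := this
  have hM0 : 0 ≤ M := le_trans (abs_nonneg _) (hM x₀)
  obtain ⟨c, hc⟩ := limsup_ae_const hT hf hM
  have hMneg : ∀ x, |(-f) x| ≤ M := fun x => by simpa using hM x
  obtain ⟨c₂, hc₂⟩ := limsup_ae_const (f := -f) hT hf.neg hMneg
  have hcI : c ≤ ∫ x, f x ∂μ := kw_main hT hf hM hc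
  have hc₂I : c₂ ≤ - ∫ x, f x ∂μ := by
    have := kw_main (f := -f) hT hf.neg hMneg hc₂
    simp only [Pi.neg_apply] at this
    rwa [integral_neg] at this
  have hnegS : ∀ x n, (∑ i ∈ Finset.range n, (-f) (T^[i] x)) / (n : ℝ)
      = - ((∑ i ∈ Finset.range n, f (T^[i] x)) / n) := by
    intro x n
    rw [← neg_div]
    congr 1
    simp [Finset.sum_neg_distrib]
  filter_upwards [hc, hc₂] with x h1 h2
  simp only [hnegS] at h2
  set I : ℝ := ∫ x, f x ∂μ with hI
  refine Metric.tendsto_nhds.2 fun ε hε => ?_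
  have e1 : ∀ᶠ n in atTop, (∑ i ∈ Finset.range n, f (T^[i] x)) / (n:ℝ) < I + ε := by
    refine Filter.eventually_lt_of_limsup_lt ?_ (bdd_above_of_abs (abs_S_div_le hM hM0 x))
    rw [h1]; linarith
  have e2 : ∀ᶠ n in atTop, - ((∑ i ∈ Finset.range n, f (T^[i] x)) / (n:ℝ)) < - I + ε := by
    refine Filter.eventually_lt_of_limsup_lt ?_ ?_
    · rw [h2]; linarith
    · refine bdd_above_of_abs (M := M) fun n => ?_
      rw [abs_neg]; exact abs_S_div_le hM hM0 x n
  filter_upwards [e1, e2] with n hn1 hn2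
  rw [Real.dist_eq, abs_sub_lt_iff]
  constructor <;> linarith

end Birkhoff2

section OrdStat2

variable {k n : ℕ} {x : ℕ → ℝ}

/-- If fewer than `k` of the values are `≤ q`, then the `k`-th order statistic is `> q`. -/
lemma lt_ordStat (h1 : 1 ≤ k) (h2 : k ≤ n) {q : ℝ}
    (hcount : ((Finset.range n).filter (fun i => x i ≤ q)).card < k) :
    q < ordStat k n x := by
  classical
  by_contra hcon
  push_neg at hcon
  set l := List.ofFn (fun i : Fin n => x i) with hl
  set l' := l.insertionSort (· ≤ ·) with hl'
  have hlen : l'.length = n := sortedList_length n x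
  have hsort : l'.Pairwise (· ≤ ·) := List.pairwise_insertionSort _ _
  have hkl : k ≤ l'.length := by omega
  -- all elements in the first k entries are ≤ q
  have htake : ∀ y ∈ l'.take k, decide (y ≤ q) = true := by
    intro y hy
    rw [List.mem_iff_getElem] at hy
    obtain ⟨j, hj, rfl⟩ := hy
    have hjk : j < k := by
      have : (l'.take k).length = min k l'.length := List.length_take
      omega
    rw [List.getElem_take]
    have hjlt : j < l'.length := by omega
    have hle : l'[j] ≤ l'[k-1]'(by omega) := by
      apply List.Pairwise.rel_get_of_le hsort
      simp only [Fin.mk_le_mk]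
      omega
    simp only [decide_eq_true_eq]
    calc l'[j] ≤ l'[k-1]'(by omega) := hle
      _ = ordStat k n x := (ordStat_eq_getElem h1 h2).symm
      _ ≤ q := hcon
  have hcnt1 : k ≤ l'.countP (fun y => decide (y ≤ q)) := by
    conv_rhs => rw [← List.take_append_drop k l']
    rw [List.countP_append]
    have : (l'.take k).countP (fun y => decide (y ≤ q)) = (l'.take k).length :=
      List.countP_eq_length.2 htake
    rw [this, List.length_take]
    omega
  have hcnt2 : l'.countP (fun y => decide (y ≤ q))
      = ((Finset.range n).filter (fun i => x i ≤ q)).card := by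
    rw [(List.perm_insertionSort _ l).countP_eq]
    exact countP_eq_card_filter n x (fun y => y ≤ q)
  omega

/-- The order statistic is translation equivariant. -/
lemma ordStat_add_const (h1 : 1 ≤ k) (h2 : k ≤ n) (u : ℝ) :
    ordStat k n (fun i => x i + u) = ordStat k n x + u := by
  classical
  set l := List.ofFn (fun i : Fin n => x i) with hl
  set l' := l.insertionSort (· ≤ ·) with hl'
  have hofn : (List.ofFn (fun i : Fin n => x i + u)) = l.map (· + u) := by
    rw [hl, List.map_ofFn]
    rfl
  have hsorted : (l'.map (· + u)).Pairwise (· ≤ ·) := by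
    refine List.Pairwise.map _ (fun a b hab => ?_) (List.pairwise_insertionSort _ _)
    exact add_le_add_left hab u
  have hperm : ((l.map (· + u)).insertionSort (· ≤ ·)).Perm (l'.map (· + u)) :=
    (List.perm_insertionSort _ _).trans ((List.perm_insertionSort _ l).symm.map _)
  have heq : (l.map (· + u)).insertionSort (· ≤ ·) = l'.map (· + u) :=
    hperm.eq_of_pairwise' (List.pairwise_insertionSort _ _) hsorted
  rw [ordStat, ordStat, hofn, heq]
  have hlen : l'.length = n := sortedList_length n x
  have hk1 : k - 1 < (l'.map (· + u)).length := by
    rw [List.length_map]; omega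
  rw [List.getD_eq_getElem _ _ hk1, List.getD_eq_getElem _ _ (by omega : k - 1 < l'.length),
    List.getElem_map]

/-- Splitting the near-count. -/
lemma nearCount_card_split (n : ℕ) (x : ℕ → ℝ) (O a : ℝ) (ha : 0 < a) :
    (((Finset.range n).filter (fun i => O - a < x i ∧ x i < O)).card : ℝ)
      = (((Finset.range n).filter (fun i => O - a < x i)).card : ℝ)
        - (((Finset.range n).filter (fun i => O ≤ x i)).card : ℝ) := by
  classical
  set C := (Finset.range n).filter (fun i => O - a < x i ∧ x i < O) with hC
  set A := (Finset.range n).filter (fun i => O - a < x i) with hA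
  set B := (Finset.range n).filter (fun i => O ≤ x i) with hB
  have hunion : A = C ∪ B := by
    ext i
    simp only [hA, hC, hB, Finset.mem_filter, Finset.mem_union, Finset.mem_range]
    constructor
    · rintro ⟨hi, hgt⟩
      rcases lt_or_ge (x i) O with h | h
      · exact Or.inl ⟨hi, hgt, h⟩
      · exact Or.inr ⟨hi, h⟩
    · rintro (⟨hi, hgt, _⟩ | ⟨hi, hge⟩)
      · exact ⟨hi, hgt⟩
      · exact ⟨hi, by linarith⟩
  have hdisj : Disjoint C B := by
    rw [Finset.disjoint_left]
    intro i hiC hiB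
    simp only [hC, Finset.mem_filter] at hiC
    simp only [hB, Finset.mem_filter] at hiB
    linarith [hiC.2.2, hiB.2]
  rw [hunion, Finset.card_union_of_disjoint hdisj]
  push_cast
  ring

end OrdStat2

section SeqSpace

lemma card_filter_cast_real (n : ℕ) (P : ℕ → Prop) [DecidablePred P] :
    ((((Finset.range n).filter P).card : ℕ) : ℝ)
      = ∑ i ∈ Finset.range n, if P i then (1:ℝ) else 0 := by
  rw [Finset.card_filter, Nat.cast_sum]
  refine Finset.sum_congr rfl fun i _ => ?_
  by_cases h : P i <;> simp [h]

lemma measurable_seqShift : Measurable seqShift :=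
  measurable_pi_lambda _ fun n => measurable_pi_apply (n + 1)

lemma seqShift_iterate (i : ℕ) (y : ℕ → ℝ) (j : ℕ) : seqShift^[i] y j = y (j + i) := by
  induction i generalizing y j with
  | zero => rfl
  | succ m IH =>
    rw [Function.iterate_succ_apply, IH]
    simp only [seqShift]
    congr 1

variable {Ω : Type*} [MeasurableSpace Ω] {μ : Measure Ω} [IsProbabilityMeasure μ]
  {X : ℕ → Ω → ℝ}

lemma measurable_path (hX : ∀ n, Measurable (X n)) : Measurable (path X) :=
  measurable_pi_lambda _ hX

/-- Ergodic count convergence for a fixed threshold. -/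
lemma count_tendsto (hX : ∀ n, Measurable (X n))
    (herg : Ergodic seqShift (Measure.map (path X) μ)) (r : ℝ) :
    ∀ᵐ ω ∂μ, Filter.Tendsto
      (fun n => ((((Finset.range n).filter (fun i => r < X i ω)).card : ℕ) : ℝ) / n) atTop
      (𝓝 ((μ {ω' | r < X 0 ω'}).toReal)) := by
  classical
  set ν := Measure.map (path X) μ with hν
  haveI : IsProbabilityMeasure ν :=
    Measure.isProbabilityMeasure_map (measurable_path hX).aemeasurable
  set f : (ℕ → ℝ) → ℝ := fun y => if r < y 0 then 1 else 0 with hf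
  have hs0 : MeasurableSet {y : ℕ → ℝ | r < y 0} :=
    measurableSet_lt measurable_const (measurable_pi_apply 0)
  have hfm : Measurable f := Measurable.ite hs0 measurable_const measurable_const
  have hfb : ∀ y, |f y| ≤ 1 := by
    intro y
    by_cases h : r < y 0 <;> simp [hf, h]
  have hint : ∫ y, f y ∂ν = (ν {y : ℕ → ℝ | r < y 0}).toReal := by
    have : f = Set.indicator {y : ℕ → ℝ | r < y 0} (fun _ => (1:ℝ)) := by
      funext y
      by_cases h : r < y 0 <;> simp [hf, h, Set.indicator_apply, Set.mem_setOf_eq]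
    rw [this, integral_indicator_const _ hs0, smul_eq_mul, mul_one, measureReal_def]
  have hmeas_val : ν {y : ℕ → ℝ | r < y 0} = μ {ω' | r < X 0 ω'} := by
    rw [hν, Measure.map_apply (measurable_path hX) hs0]
    rfl
  have hbirk := birkhoff_bdd herg hfm hfb
  rw [hint, hmeas_val] at hbirk
  -- rewrite the Birkhoff sum as an indicator sum
  have hsum : ∀ y : ℕ → ℝ, ∀ n : ℕ,
      (∑ i ∈ Finset.range n, f (seqShift^[i] y))
        = ∑ i ∈ Finset.range n, (if r < y i then (1:ℝ) else 0) := by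
    intro y n
    refine Finset.sum_congr rfl fun i _ => ?_
    simp only [hf, seqShift_iterate i y 0, Nat.zero_add]
  have hbirk2 : ∀ᵐ y ∂ν, Filter.Tendsto
      (fun n => (∑ i ∈ Finset.range n, (if r < y i then (1:ℝ) else 0)) / n) atTop
      (𝓝 ((μ {ω' | r < X 0 ω'}).toReal)) := by
    filter_upwards [hbirk] with y hy
    have : (fun n => (∑ i ∈ Finset.range n, f (seqShift^[i] y)) / (n:ℝ))
        = fun n => (∑ i ∈ Finset.range n, (if r < y i then (1:ℝ) else 0)) / n := by
      funext n
      rw [hsum]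
    rwa [this] at hy
  have hmeas_tendsto : MeasurableSet {y : ℕ → ℝ | Filter.Tendsto
      (fun n => (∑ i ∈ Finset.range n, (if r < y i then (1:ℝ) else 0)) / n) atTop
      (𝓝 ((μ {ω' | r < X 0 ω'}).toReal))} := by
    refine measurableSet_tendsto _ fun n => ?_
    refine Measurable.div_const ?_ _
    refine Finset.measurable_sum _ fun i _ => ?_
    exact Measurable.ite (measurableSet_lt measurable_const (measurable_pi_apply i))
      measurable_const measurable_const
  have := (ae_map_iff (measurable_path hX).aemeasurable hmeas_tendsto).1 hbirk2
  filter_upwards [this] with ω hω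
  have heq : (fun n => ((((Finset.range n).filter (fun i => r < X i ω)).card : ℕ) : ℝ) / n)
      = fun n => (∑ i ∈ Finset.range n, (if r < X i ω then (1:ℝ) else 0)) / n := by
    funext n
    rw [card_filter_cast_real]
  rw [heq]
  exact hω

/-- A.s. all coordinates are `≤ γ` provided `X 0 ≤ γ` a.s. -/
lemma all_le_gamma (hX : ∀ n, Measurable (X n))
    (herg : Ergodic seqShift (Measure.map (path X) μ)) {γ : ℝ}
    (h0 : μ {ω | γ < X 0 ω} = 0) :
    ∀ᵐ ω ∂μ, ∀ i, X i ω ≤ γ := by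
  rw [ae_all_iff]
  intro i
  have hs0 : MeasurableSet {y : ℕ → ℝ | γ < y 0} :=
    measurableSet_lt measurable_const (measurable_pi_apply 0)
  have hsi : MeasurableSet {y : ℕ → ℝ | γ < y i} :=
    measurableSet_lt measurable_const (measurable_pi_apply i)
  have hpre : (seqShift^[i]) ⁻¹' {y : ℕ → ℝ | γ < y 0} = {y : ℕ → ℝ | γ < y i} := by
    ext y
    simp only [Set.mem_preimage, Set.mem_setOf_eq, seqShift_iterate i y 0, Nat.zero_add]
  have hmp : MeasurePreserving (seqShift^[i]) (Measure.map (path X) μ)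
      (Measure.map (path X) μ) := herg.toMeasurePreserving.iterate i
  have h1 : Measure.map (path X) μ {y : ℕ → ℝ | γ < y i}
      = Measure.map (path X) μ {y : ℕ → ℝ | γ < y 0} := by
    rw [← hpre]
    exact hmp.measure_preimage hs0.nullMeasurableSet
  have h2 : Measure.map (path X) μ {y : ℕ → ℝ | γ < y 0} = μ {ω | γ < X 0 ω} := by
    rw [Measure.map_apply (measurable_path hX) hs0]; rfl
  have h3 : Measure.map (path X) μ {y : ℕ → ℝ | γ < y i} = μ {ω | γ < X i ω} := by
    rw [Measure.map_apply (measurable_path hX) hsi]; rfl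
  have : μ {ω | γ < X i ω} = 0 := by rw [← h3, h1, h2, h0]
  have hsub : {ω | ¬ X i ω ≤ γ} ⊆ {ω | γ < X i ω} := fun ω hω => not_le.1 hω
  exact measure_mono_null hsub this

end SeqSpace

section Gamma

variable {Ω : Type*} [MeasurableSpace Ω] {μ : Measure Ω} [IsProbabilityMeasure μ]
  {X0 : Ω → ℝ} {γ : ℝ}

lemma F_lt_one (hγ : rightEndpoint μ X0 = (γ : EReal)) {r : ℝ} (hr : r < γ) :
    μ {ω | X0 ω ≤ r} < 1 := by
  have h : (r : EReal) < sSup ((fun t : ℝ => (t : EReal)) '' {t : ℝ | μ {ω | X0 ω ≤ t} < 1}) := by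
    rw [show sSup ((fun t : ℝ => (t : EReal)) '' {t : ℝ | μ {ω | X0 ω ≤ t} < 1})
        = rightEndpoint μ X0 from rfl, hγ]
    exact_mod_cast hr
  obtain ⟨b, hb, hrb⟩ := lt_sSup_iff.1 h
  obtain ⟨s, hs, rfl⟩ := hb
  have hrs : r < s := by simpa using hrb
  calc μ {ω | X0 ω ≤ r} ≤ μ {ω | X0 ω ≤ s} := measure_mono fun ω hω => le_trans hω hrs.le
    _ < 1 := hs

lemma gt_gamma_null (hm : Measurable X0) (hγ : rightEndpoint μ X0 = (γ : EReal)) :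
    μ {ω | γ < X0 ω} = 0 := by
  have hstep : ∀ s : ℝ, γ < s → μ {ω | s < X0 ω} = 0 := by
    intro s hs
    have h1 : μ {ω | X0 ω ≤ s} = 1 := by
      refine le_antisymm prob_le_one (not_lt.1 fun hlt => ?_)
      have hmem : (s : EReal) ∈ (fun t : ℝ => (t : EReal)) '' {t : ℝ | μ {ω | X0 ω ≤ t} < 1} :=
        ⟨s, hlt, rfl⟩
      have := le_sSup hmem
      rw [show sSup ((fun t : ℝ => (t : EReal)) '' {t : ℝ | μ {ω | X0 ω ≤ t} < 1})
          = rightEndpoint μ X0 from rfl, hγ] at this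
      have : s ≤ γ := by exact_mod_cast this
      linarith
    have hset : {ω | s < X0 ω} = {ω | X0 ω ≤ s}ᶜ := by
      ext ω; simp [not_le]
    rw [hset, measure_compl (measurableSet_le hm measurable_const) (measure_ne_top μ _), h1,
      measure_univ, tsub_self]
  have hcover : {ω | γ < X0 ω} ⊆ ⋃ k : ℕ, {ω | γ + 1/(k+1) < X0 ω} := by
    intro ω hω
    simp only [Set.mem_setOf_eq] at hω
    obtain ⟨k, hk⟩ := exists_nat_one_div_lt (by linarith : (0:ℝ) < X0 ω - γ)
    exact Set.mem_iUnion.2 ⟨k, by simp only [Set.mem_setOf_eq]; push_cast at hk ⊢; linarith⟩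
  refine measure_mono_null hcover (measure_iUnion_null fun k => hstep _ ?_)
  have : (0:ℝ) < 1/((k:ℝ)+1) := by positivity
  linarith

lemma gt_toReal_pos (hγ : rightEndpoint μ X0 = (γ : EReal)) {r : ℝ} (hr : r < γ)
    (hm : Measurable X0) : 0 < (μ {ω | r < X0 ω}).toReal := by
  have hlt := F_lt_one hγ hr
  have hset : {ω | r < X0 ω} = {ω | X0 ω ≤ r}ᶜ := by ext ω; simp [not_le]
  have hcompl : μ {ω | r < X0 ω} = 1 - μ {ω | X0 ω ≤ r} := by
    rw [hset, measure_compl (measurableSet_le hm measurable_const) (measure_ne_top μ _),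
      measure_univ]
  refine ENNReal.toReal_pos ?_ (measure_ne_top μ _)
  rw [hcompl]
  exact (tsub_pos_iff_lt.2 hlt).ne'

lemma ge_gamma_null (hm : Measurable X0) (hγ : rightEndpoint μ X0 = (γ : EReal))
    (h1 : μ {ω | X0 ω = γ} = 0) : μ {ω | γ ≤ X0 ω} = 0 := by
  have hsub : {ω | γ ≤ X0 ω} ⊆ {ω | γ < X0 ω} ∪ {ω | X0 ω = γ} := by
    intro ω hω
    rcases lt_or_eq_of_le (show γ ≤ X0 ω from hω) with h | h
    · exact Or.inl h
    · exact Or.inr h.symm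
  refine measure_mono_null hsub ?_
  refine measure_union_null (gt_gamma_null hm hγ) h1

/-- Choose a rational threshold `q < b` whose tail probability is close to that of `b`,
assuming the relevant upper set has the given measure limit. -/
lemma exists_rat_lt_tail_close (hm : Measurable X0) (b : ℝ) {δ : ℝ} (hδ : 0 < δ)
    {L : ℝ≥0∞} (hL : μ {ω | b ≤ X0 ω} = L) :
    ∃ q : ℚ, (q : ℝ) < b ∧ (μ {ω | (q:ℝ) < X0 ω}).toReal < L.toReal + δ := by
  set s : ℕ → Set Ω := fun k => {ω | b - 1/(k+1) < X0 ω} with hs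
  have hsm : ∀ k, MeasurableSet (s k) := fun k =>
    measurableSet_lt measurable_const hm
  have hanti : Antitone s := by
    intro k₁ k₂ h ω hω
    simp only [hs, Set.mem_setOf_eq] at *
    have h1 : 1/((k₂:ℝ)+1) ≤ 1/((k₁:ℝ)+1) := by
      apply one_div_le_one_div_of_le
      · positivity
      · push_cast; exact_mod_cast by exact_mod_cast add_le_add_left (Nat.cast_le.2 h) 1
    linarith
  have hinter : (⋂ k, s k) = {ω | b ≤ X0 ω} := by
    ext ω
    simp only [hs, Set.mem_iInter, Set.mem_setOf_eq]
    constructor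
    · intro h
      by_contra hcon
      push_neg at hcon
      obtain ⟨k, hk⟩ := exists_nat_one_div_lt (by linarith : (0:ℝ) < b - X0 ω)
      have := h k
      push_cast at hk this
      linarith
    · intro h k
      have : (0:ℝ) < 1/((k:ℝ)+1) := by positivity
      linarith
  have htend : Filter.Tendsto (fun k => μ (s k)) atTop (𝓝 L) := by
    have := MeasureTheory.tendsto_measure_iInter_atTop (fun k => (hsm k).nullMeasurableSet)
      hanti ⟨0, measure_ne_top μ _⟩
    rwa [hinter, hL] at this
  have htendR : Filter.Tendsto (fun k => (μ (s k)).toReal) atTop (𝓝 L.toReal) := by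
    refine (ENNReal.tendsto_toReal ?_).comp htend
    rw [← hL]; exact measure_ne_top μ _
  obtain ⟨k, hk⟩ := (htendR.eventually_lt_const (by linarith : L.toReal < L.toReal + δ)).exists
  have hpos : (0:ℝ) < 1/((k:ℝ)+1) := by positivity
  obtain ⟨q, hq1, hq2⟩ := exists_rat_btwn (by linarith : b - 1/((k:ℝ)+1) < b)
  refine ⟨q, hq2, lt_of_le_of_lt ?_ hk⟩
  refine ENNReal.toReal_mono (measure_ne_top μ _) (measure_mono ?_)
  intro ω hω
  simp only [hs, Set.mem_setOf_eq] at *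
  linarith

/-- Choose a rational threshold `q > b` whose tail probability is close to that of `b`. -/
lemma exists_rat_gt_tail_close (hm : Measurable X0) (b : ℝ) {δ : ℝ} (hδ : 0 < δ) :
    ∃ q : ℚ, b < (q : ℝ) ∧
      (μ {ω | b < X0 ω}).toReal - δ < (μ {ω | (q:ℝ) < X0 ω}).toReal := by
  set t : ℕ → Set Ω := fun k => {ω | b + 1/(k+1) < X0 ω} with ht
  have hmono : Monotone t := by
    intro k₁ k₂ h ω hω
    simp only [ht, Set.mem_setOf_eq] at *
    have h1 : 1/((k₂:ℝ)+1) ≤ 1/((k₁:ℝ)+1) := by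
      apply one_div_le_one_div_of_le
      · positivity
      · exact_mod_cast add_le_add_left (Nat.cast_le.2 h) 1
    linarith
  have hunion : (⋃ k, t k) = {ω | b < X0 ω} := by
    ext ω
    simp only [ht, Set.mem_iUnion, Set.mem_setOf_eq]
    constructor
    · rintro ⟨k, hk⟩
      have : (0:ℝ) < 1/((k:ℝ)+1) := by positivity
      linarith
    · intro h
      obtain ⟨k, hk⟩ := exists_nat_one_div_lt (by linarith : (0:ℝ) < X0 ω - b)
      exact ⟨k, by push_cast at hk ⊢; linarith⟩
  have htend : Filter.Tendsto (fun k => μ (t k)) atTop (𝓝 (μ {ω | b < X0 ω})) := by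
    have := MeasureTheory.tendsto_measure_iUnion_atTop (μ := μ) hmono
    rwa [hunion] at this
  have htendR : Filter.Tendsto (fun k => (μ (t k)).toReal) atTop
      (𝓝 ((μ {ω | b < X0 ω}).toReal)) :=
    (ENNReal.tendsto_toReal (measure_ne_top μ _)).comp htend
  obtain ⟨k, hk⟩ := (htendR.eventually_const_lt
    (by linarith : (μ {ω | b < X0 ω}).toReal - δ < (μ {ω | b < X0 ω}).toReal)).exists
  have hpos : (0:ℝ) < 1/((k:ℝ)+1) := by positivity
  obtain ⟨q, hq1, hq2⟩ := exists_rat_btwn (by linarith : b < b + 1/((k:ℝ)+1))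
  refine ⟨q, hq1, lt_of_lt_of_le hk ?_⟩
  refine ENNReal.toReal_mono (measure_ne_top μ _) (measure_mono ?_)
  intro ω hω
  simp only [ht, Set.mem_setOf_eq] at *
  linarith

end Gamma
theorem stmt16 {Ω : Type*} [MeasurableSpace Ω] (μ : Measure Ω) [IsProbabilityMeasure μ]
    (X : ℕ → Ω → ℝ) (hX : ∀ n, Measurable (X n))
    (herg : Ergodic seqShift (Measure.map (path X) μ))
    (γ : ℝ) (hγ : rightEndpoint μ (X 0) = (γ : EReal))
    (a : ℝ) (ha : 0 < a)
    (h1 : μ {ω | X 0 ω = γ} = 0) (h2 : μ {ω | X 0 ω = γ - a} = 0)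
    (U : Ω → ℝ) (hU : Measurable U)
    (k : ℕ → ℕ) (hk : ∀ n, 1 ≤ n → 1 ≤ k n ∧ k n ≤ n)
    (hk1 : Tendsto (fun n => (k n : ℝ) / n) atTop (𝓝 1)) :
    ∀ᵐ ω ∂μ, Tendsto
      (fun n => (nearCount (k n) n a (fun i => X i ω + U ω) : ℝ) / n) atTop
      (𝓝 ((μ {ω' | γ - a < X 0 ω'}).toReal)) := by
  classical
  have hG1 : ∀ᵐ ω ∂μ, ∀ q : ℚ, Tendsto
      (fun n => ((((Finset.range n).filter (fun i => (q:ℝ) < X i ω)).card : ℕ) : ℝ) / n) atTop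
      (𝓝 ((μ {ω' | (q:ℝ) < X 0 ω'}).toReal)) :=
    ae_all_iff.2 fun q => count_tendsto hX herg (q : ℝ)
  have hG2 : ∀ᵐ ω ∂μ, ∀ i, X i ω ≤ γ :=
    all_le_gamma hX herg (gt_gamma_null (hX 0) hγ)
  filter_upwards [hG1, hG2] with ω hcnt hle
  set x : ℕ → ℝ := fun i => X i ω with hxdef
  set u : ℝ := U ω with hudef
  set pstar : ℝ := (μ {ω' | γ - a < X 0 ω'}).toReal with hpstar
  set O : ℕ → ℝ := fun n => ordStat (k n) n x with hO
  -- counting function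
  set cnt : ℝ → ℕ → ℕ := fun r n => ((Finset.range n).filter (fun i => r < x i)).card with hcntdef
  have hcnt' : ∀ q : ℚ, Tendsto (fun n => ((cnt (q:ℝ) n : ℕ) : ℝ) / n) atTop
      (𝓝 ((μ {ω' | (q:ℝ) < X 0 ω'}).toReal)) := fun q => hcnt q
  -- (K1) eventual lower bound for the order statistic
  have hK1 : ∀ q : ℚ, (q : ℝ) < γ → ∀ᶠ n in atTop, (q : ℝ) < O n := by
    intro q hq
    have hppos : 0 < (μ {ω' | (q:ℝ) < X 0 ω'}).toReal := gt_toReal_pos hγ hq (hX 0)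
    have hsum : Tendsto (fun n => (k n : ℝ)/n + ((cnt (q:ℝ) n : ℕ) : ℝ)/n) atTop
        (𝓝 (1 + (μ {ω' | (q:ℝ) < X 0 ω'}).toReal)) := hk1.add (hcnt' q)
    have hev : ∀ᶠ n in atTop, (1:ℝ) < (k n : ℝ)/n + ((cnt (q:ℝ) n : ℕ) : ℝ)/n :=
      hsum.eventually_const_lt (by linarith)
    filter_upwards [hev, Filter.eventually_ge_atTop 1] with n hn hn1
    have hkn := hk n hn1
    have hnpos : (0:ℝ) < n := by exact_mod_cast hn1
    have hgt : (n : ℝ) < (k n : ℝ) + ((cnt (q:ℝ) n : ℕ) : ℝ) := by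
      have := mul_lt_mul_of_pos_left hn hnpos
      rw [mul_add, mul_div_cancel₀ _ (ne_of_gt hnpos), mul_div_cancel₀ _ (ne_of_gt hnpos),
        mul_one] at this
      linarith
    have hgtn : n < k n + cnt (q:ℝ) n := by exact_mod_cast hgt
    have hsplit : ((Finset.range n).filter (fun i => x i ≤ (q:ℝ))).card
        + ((Finset.range n).filter (fun i => (q:ℝ) < x i)).card = n := by
      have h := Finset.card_filter_add_card_filter_not
        (s := Finset.range n) (p := fun i => x i ≤ (q:ℝ))
      have heq : (Finset.range n).filter (fun i => ¬ (x i ≤ (q:ℝ)))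
          = (Finset.range n).filter (fun i => (q:ℝ) < x i) := by
        ext i
        simp [not_le]
      rw [heq] at h
      rw [h, Finset.card_range]
    have hcard : ((Finset.range n).filter (fun i => x i ≤ (q:ℝ))).card < k n := by
      simp only [hcntdef] at hgtn
      omega
    exact lt_ordStat hkn.1 hkn.2 hcard
  -- (K2) upper bound
  have hK2 : ∀ n, 1 ≤ n → O n ≤ γ := by
    intro n hn1
    exact ordStat_le_of_all (hk n hn1).1 (hk n hn1).2 fun i => hle i
  -- (C1) the fraction of points ≥ O n tends to 0
  have hC1 : Tendsto
      (fun n => ((((Finset.range n).filter (fun i => O n ≤ x i)).card : ℕ) : ℝ) / n)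
      atTop (𝓝 0) := by
    rw [Metric.tendsto_nhds]
    intro δ hδ
    have hLnull : μ {ω' | γ ≤ X 0 ω'} = 0 := ge_gamma_null (hX 0) hγ h1
    obtain ⟨q, hqγ, hqsmall⟩ := exists_rat_lt_tail_close (μ := μ) (hX 0) γ hδ (L := 0) hLnull
    rw [ENNReal.toReal_zero, zero_add] at hqsmall
    have hev1 := hK1 q hqγ
    have hev2 : ∀ᶠ n in atTop, ((cnt (q:ℝ) n : ℕ) : ℝ)/n < δ :=
      (hcnt' q).eventually_lt_const hqsmall
    filter_upwards [hev1, hev2, Filter.eventually_ge_atTop 1] with n hn1 hn2 hn3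
    have hnpos : (0:ℝ) < n := by exact_mod_cast hn3
    have hsub : (Finset.range n).filter (fun i => O n ≤ x i)
        ⊆ (Finset.range n).filter (fun i => (q:ℝ) < x i) := by
      intro i hi
      simp only [Finset.mem_filter] at hi ⊢
      exact ⟨hi.1, lt_of_lt_of_le hn1 hi.2⟩
    have hcard := Finset.card_le_card hsub
    have hfrac : ((((Finset.range n).filter (fun i => O n ≤ x i)).card : ℕ) : ℝ)/n
        ≤ ((cnt (q:ℝ) n : ℕ) : ℝ)/n := by
      rw [div_le_div_iff_of_pos_right hnpos]
      exact_mod_cast hcard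
    rw [Real.dist_eq, sub_zero, abs_of_nonneg (by positivity)]
    exact lt_of_le_of_lt hfrac hn2
  -- (C2) the fraction of points > O n - a tends to pstar
  have hC2 : Tendsto
      (fun n => ((((Finset.range n).filter (fun i => O n - a < x i)).card : ℕ) : ℝ) / n)
      atTop (𝓝 pstar) := by
    rw [Metric.tendsto_nhds]
    intro δ hδ
    have hmeq : μ {ω' | γ - a ≤ X 0 ω'} = μ {ω' | γ - a < X 0 ω'} := by
      refine le_antisymm ?_ (measure_mono fun ω' hω' => le_of_lt (show γ - a < X 0 ω' from hω'))
      have hsub : {ω' | γ - a ≤ X 0 ω'} ⊆ {ω' | γ - a < X 0 ω'} ∪ {ω' | X 0 ω' = γ - a} := by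
        intro ω' hω'
        rcases lt_or_eq_of_le (show γ - a ≤ X 0 ω' from hω') with h | h
        · exact Or.inl h
        · exact Or.inr h.symm
      calc μ {ω' | γ - a ≤ X 0 ω'} ≤ μ ({ω' | γ - a < X 0 ω'} ∪ {ω' | X 0 ω' = γ - a}) :=
            measure_mono hsub
        _ ≤ μ {ω' | γ - a < X 0 ω'} + μ {ω' | X 0 ω' = γ - a} := measure_union_le _ _
        _ = μ {ω' | γ - a < X 0 ω'} := by rw [h2, add_zero]
    obtain ⟨q₁, hq₁lt, hq₁close⟩ := exists_rat_lt_tail_close (μ := μ) (hX 0) (γ - a) hδ hmeq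
    obtain ⟨q₂, hq₂gt, hq₂close⟩ := exists_rat_gt_tail_close (μ := μ) (hX 0) (γ - a) hδ
    rw [← hpstar] at hq₁close hq₂close
    obtain ⟨q₃, hq₃1, hq₃2⟩ := exists_rat_btwn (by linarith : (q₁ : ℝ) + a < γ)
    have hev3 := hK1 q₃ hq₃2
    have hev4 : ∀ᶠ n in atTop, ((cnt (q₁:ℝ) n : ℕ) : ℝ)/n < pstar + δ :=
      (hcnt' q₁).eventually_lt_const hq₁close
    have hev5 : ∀ᶠ n in atTop, pstar - δ < ((cnt (q₂:ℝ) n : ℕ) : ℝ)/n :=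
      (hcnt' q₂).eventually_const_lt hq₂close
    filter_upwards [hev3, hev4, hev5, Filter.eventually_ge_atTop 1] with n hn3 hn4 hn5 hn1
    have hnpos : (0:ℝ) < n := by exact_mod_cast hn1
    have hOn1 : (q₁ : ℝ) < O n - a := by linarith
    have hOn2 : O n - a < (q₂ : ℝ) := by linarith [hK2 n hn1]
    have hsub1 : (Finset.range n).filter (fun i => O n - a < x i)
        ⊆ (Finset.range n).filter (fun i => (q₁:ℝ) < x i) := by
      intro i hi
      simp only [Finset.mem_filter] at hi ⊢
      exact ⟨hi.1, lt_trans hOn1 hi.2⟩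
    have hsub2 : (Finset.range n).filter (fun i => (q₂:ℝ) < x i)
        ⊆ (Finset.range n).filter (fun i => O n - a < x i) := by
      intro i hi
      simp only [Finset.mem_filter] at hi ⊢
      exact ⟨hi.1, lt_trans hOn2 hi.2⟩
    have hup : ((((Finset.range n).filter (fun i => O n - a < x i)).card : ℕ) : ℝ)/n
        ≤ ((cnt (q₁:ℝ) n : ℕ) : ℝ)/n := by
      rw [div_le_div_iff_of_pos_right hnpos]
      exact_mod_cast Finset.card_le_card hsub1
    have hlo : ((cnt (q₂:ℝ) n : ℕ) : ℝ)/n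
        ≤ ((((Finset.range n).filter (fun i => O n - a < x i)).card : ℕ) : ℝ)/n := by
      rw [div_le_div_iff_of_pos_right hnpos]
      exact_mod_cast Finset.card_le_card hsub2
    rw [Real.dist_eq, abs_sub_lt_iff]
    constructor <;> linarith
  -- combine
  have hfinal := hC2.sub hC1
  rw [sub_zero] at hfinal
  refine hfinal.congr' ?_
  filter_upwards [Filter.eventually_ge_atTop 1] with n hn1
  have hkn := hk n hn1
  -- remove the shift by u
  have hOrd := ordStat_add_const (x := x) hkn.1 hkn.2 u
  have hnear : nearCount (k n) n a (fun i => X i ω + U ω) = nearCount (k n) n a x := by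
    rw [nearCount, nearCount]
    congr 1
    apply Finset.filter_congr
    intro i _
    rw [show (fun i => X i ω + U ω) = fun i => x i + u from rfl, hOrd]
    constructor
    · rintro ⟨hh1, hh2⟩
      exact ⟨by linarith, by linarith⟩
    · rintro ⟨hh1, hh2⟩
      exact ⟨by linarith, by linarith⟩
  rw [show (fun i => X i ω + U ω) = fun i => x i + u from rfl] at hnear ⊢
  rw [hnear]
  rw [nearCount]
  rw [nearCount_card_split n x (ordStat (k n) n x) a ha]
  rw [sub_div]
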